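/- Let H be a real Hilbert space, V : H → H monotone, y* ∈ H with V(y*) = 0, and let μ, γ, m, λ, η, ε be real numbers with μ > 0, ε = λ − η > 0, γ − m ≥ 0, η ≥ 0, and suppose the quadratic-form condition (−2εμ + λμ − 2γ + m)² − 3ε·(4/3)μ(γ − m) ≤ 0 holds. Then for all y, x, h ∈ H with ⟨x, h⟩ ≥ 0: 4η(m − γ)⟨y − y*, V(y)⟩ − 4ε‖x‖² − 2μ⟨x, h⟩ + 2(−2εμ + λμ − 2γ + m)⟨x, V(y)⟩ + 2μ(m − γ)‖V(y)‖² ≤ 4η(m − γ)⟨y − y*, V(y)⟩ − ε‖x‖² + (2/3)μ(m − γ)‖V(y)‖² ≤ 0. -/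

import Mathlib

theorem operator_drift_nonpositive
    {H : Type*} [NormedAddCommGroup H] [InnerProductSpace ℝ H]
    (V : H → H)
    (hmono : ∀ a b : H, (0:ℝ) ≤ inner ℝ (V a - V b) (a - b))
    (ystar : H) (hzero : V ystar = 0)
    (μ γ m lam η ε : ℝ) (hμ : 0 < μ) (hε : ε = lam - η) (hεpos : 0 < ε)
    (hγm : 0 ≤ γ - m) (hη : 0 ≤ η)
    (hquad : ((-2) * ε * μ + lam * μ - 2 * γ + m) ^ 2
        - 3 * ε * ((4 / 3) * μ * (γ - m)) ≤ 0) :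
    ∀ y x h : H, (0:ℝ) ≤ inner ℝ x h →
      (4 * η * (m - γ) * inner ℝ (y - ystar) (V y) - 4 * ε * ‖x‖ ^ 2
          - 2 * μ * inner ℝ x h
          + 2 * ((-2) * ε * μ + lam * μ - 2 * γ + m) * inner ℝ x (V y)
          + 2 * μ * (m - γ) * ‖V y‖ ^ 2
        ≤ 4 * η * (m - γ) * inner ℝ (y - ystar) (V y) - ε * ‖x‖ ^ 2
          + (2 / 3) * μ * (m - γ) * ‖V y‖ ^ 2) ∧
      (4 * η * (m - γ) * inner ℝ (y - ystar) (V y) - ε * ‖x‖ ^ 2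
          + (2 / 3) * μ * (m - γ) * ‖V y‖ ^ 2 ≤ 0) := by
  intro y x h hxh
  set B : ℝ := (-2) * ε * μ + lam * μ - 2 * γ + m with hB
  have hmonoy : (0:ℝ) ≤ inner ℝ (y - ystar) (V y) := by
    have := hmono y ystar
    rw [hzero, sub_zero] at this
    rwa [real_inner_comm]
  have hip : |(inner ℝ x (V y) : ℝ)| ≤ ‖x‖ * ‖V y‖ := abs_real_inner_le_norm x (V y)
  have hip1 : (inner ℝ x (V y) : ℝ) ≤ ‖x‖ * ‖V y‖ := (abs_le.mp hip).2
  have hip2 : -(‖x‖ * ‖V y‖) ≤ (inner ℝ x (V y) : ℝ) := (abs_le.mp hip).1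
  have hnx : (0:ℝ) ≤ ‖x‖ := norm_nonneg x
  have hnv : (0:ℝ) ≤ ‖V y‖ := norm_nonneg (V y)
  have habs : B * (inner ℝ x (V y) : ℝ) ≤ |B| * (‖x‖ * ‖V y‖) := by
    calc B * (inner ℝ x (V y) : ℝ) ≤ |B * (inner ℝ x (V y) : ℝ)| := le_abs_self _
    _ = |B| * |(inner ℝ x (V y) : ℝ)| := abs_mul _ _
    _ ≤ |B| * (‖x‖ * ‖V y‖) := by
        exact mul_le_mul_of_nonneg_left hip (abs_nonneg B)
  have hq2 : |B| ^ 2 ≤ 3 * ε * ((4/3) * μ * (γ - m)) := by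
    rw [sq_abs]; linarith
  have key0 : 0 ≤ 3 * ε * (3 * ε * ‖x‖ ^ 2 + (4/3) * μ * (γ - m) * ‖V y‖ ^ 2
      - 2 * |B| * (‖x‖ * ‖V y‖)) := by
    nlinarith [sq_nonneg (3 * ε * ‖x‖ - |B| * ‖V y‖),
      mul_nonneg (sub_nonneg.mpr hq2) (sq_nonneg ‖V y‖)]
  have hεne : (3 * ε) ≠ 0 := by positivity
  have key1 : 0 ≤ 3 * ε * ‖x‖ ^ 2 + (4/3) * μ * (γ - m) * ‖V y‖ ^ 2
      - 2 * |B| * (‖x‖ * ‖V y‖) := by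
    have := div_nonneg key0 (by positivity : (0:ℝ) ≤ 3 * ε)
    rwa [mul_div_cancel_left₀ _ hεne] at this
  have key : 2 * B * (inner ℝ x (V y) : ℝ)
      ≤ 3 * ε * ‖x‖ ^ 2 + (4/3) * μ * (γ - m) * ‖V y‖ ^ 2 := by
    nlinarith [habs]
  constructor
  · linarith [key, mul_nonneg hμ.le hxh]
  · have t1 : 0 ≤ η * (γ - m) * (inner ℝ (y - ystar) (V y) : ℝ) :=
      mul_nonneg (mul_nonneg hη hγm) hmonoy
    have t2 : 0 ≤ ε * ‖x‖ ^ 2 := mul_nonneg hεpos.le (sq_nonneg _)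
    have t3 : 0 ≤ μ * (γ - m) * ‖V y‖ ^ 2 :=
      mul_nonneg (mul_nonneg hμ.le hγm) (sq_nonneg _)
    linarith
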